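/- For all integers n ≥ 0 and k ≥ 1, the number of set partitions of [n+1] avoiding classical k-crossings equals the sum over i from 0 to n of binomial(n,i) times the number of set partitions of [i] avoiding enhanced k-crossings. -/

import Mathlib

/-- `(a, b)` is an arc of the set partition `π`: `a < b` lie in a common block
with no element of that block strictly between them. -/
def IsArc {s : Finset ℕ} (π : Finpartition s) (a b : ℕ) : Prop :=
  a < b ∧ ∃ B ∈ π.parts, a ∈ B ∧ b ∈ B ∧ ∀ x ∈ B, ¬(a < x ∧ x < b)

/-- Enhanced (possibly trivial) arc: a genuine arc, or a trivial arc at a singleton block. -/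
def IsEArc {s : Finset ℕ} (π : Finpartition s) (a b : ℕ) : Prop :=
  IsArc π a b ∨ (a = b ∧ {a} ∈ π.parts)

/-- `π` has an enhanced `k`-crossing: `a₁ < ⋯ < a_k ≤ b₁ < ⋯ < b_k` with each
`(aᵢ, bᵢ)` a (possibly trivial) arc. -/
def EnhCross {s : Finset ℕ} (π : Finpartition s) (k : ℕ) : Prop :=
  ∃ a b : Fin k → ℕ, StrictMono a ∧ StrictMono b ∧
    (∀ i j, a i ≤ b j) ∧ ∀ i, IsEArc π (a i) (b i)

/-- `π` has a classical `k`-crossing: `a₁ < ⋯ < a_k < b₁ < ⋯ < b_k` with each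
`(aᵢ, bᵢ)` an arc. -/
def ClCross {s : Finset ℕ} (π : Finpartition s) (k : ℕ) : Prop :=
  ∃ a b : Fin k → ℕ, StrictMono a ∧ StrictMono b ∧
    (∀ i j, a i < b j) ∧ ∀ i, IsArc π (a i) (b i)

/-- `π` has an enhanced `k`-nesting: `a₁ < ⋯ < a_k ≤ b_k < ⋯ < b₁` with each
`(aᵢ, bᵢ)` a (possibly trivial) arc. -/
def EnhNest {s : Finset ℕ} (π : Finpartition s) (k : ℕ) : Prop :=
  ∃ a b : Fin k → ℕ, StrictMono a ∧ StrictAnti b ∧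
    (∀ i j, a i ≤ b j) ∧ ∀ i, IsEArc π (a i) (b i)

/-- `π` has a classical `k`-nesting: additionally `a_k < b_k`. -/
def ClNest {s : Finset ℕ} (π : Finpartition s) (k : ℕ) : Prop :=
  ∃ a b : Fin k → ℕ, StrictMono a ∧ StrictAnti b ∧
    (∀ i j, a i < b j) ∧ ∀ i, IsArc π (a i) (b i)

/-- `σ = π̂`: the arcs of `σ` are exactly `(v, w+1)` for arcs `(v, w)` of `π`
together with `(u, u+1)` for singleton blocks `{u}` of `π`. -/
def HatRel {s t : Finset ℕ} (π : Finpartition s) (σ : Finpartition t) : Prop :=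
  ∀ x y, IsArc σ x y ↔
    ((∃ v w, IsArc π v w ∧ x = v ∧ y = w + 1) ∨ ({x} ∈ π.parts ∧ y = x + 1))

namespace SPX

open Finset

attribute [local instance] Classical.propDecidable

noncomputable section

structure ArcSys (m : ℕ) where
  arcs : Finset (ℕ × ℕ)
  lt' : ∀ p ∈ arcs, p.1 < p.2
  mem1 : ∀ p ∈ arcs, p.1 ∈ Finset.Icc 1 m
  mem2 : ∀ p ∈ arcs, p.2 ∈ Finset.Icc 1 m
  injL : ∀ p ∈ arcs, ∀ q ∈ arcs, p.1 = q.1 → p = q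
  injR : ∀ p ∈ arcs, ∀ q ∈ arcs, p.2 = q.2 → p = q

lemma ArcSys.ext' {m : ℕ} {A B : ArcSys m} (h : A.arcs = B.arcs) : A = B := by
  cases A; cases B; cases h; rfl

variable {m : ℕ}

/-- Reachability along arcs. -/
def Reach (A : ArcSys m) : ℕ → ℕ → Prop :=
  Relation.ReflTransGen (fun a b => (a, b) ∈ A.arcs)

lemma reach_le {A : ArcSys m} {x y : ℕ} (h : Reach A x y) : x ≤ y := by
  induction h with
  | refl => exact le_refl _
  | tail _ harc ih => exact ih.trans (le_of_lt (A.lt' _ harc))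

lemma reach_mem2 {A : ArcSys m} {x y : ℕ} (hx : x ∈ Finset.Icc 1 m) (h : Reach A x y) :
    y ∈ Finset.Icc 1 m := by
  induction h with
  | refl => exact hx
  | tail _ harc _ => exact A.mem2 _ harc

lemma reach_total {A : ArcSys m} {x y z : ℕ} (hxy : Reach A x y) (hxz : Reach A x z) :
    Reach A y z ∨ Reach A z y := by
  induction hxy using Relation.ReflTransGen.head_induction_on with
  | refl => exact Or.inl hxz
  | head harc hr ih =>
    rename_i a c
    rcases Relation.ReflTransGen.cases_head hxz with h1 | ⟨d, hd, hdz⟩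
    · subst h1
      exact Or.inr (Relation.ReflTransGen.head harc hr)
    · have : d = c := by
        have := A.injL _ harc _ hd rfl
        exact (congrArg Prod.snd this.symm)
      subst this
      exact ih hdz

lemma reach_anc {A : ArcSys m} {x y z : ℕ} (hxz : Reach A x z) (hyz : Reach A y z) :
    Reach A x y ∨ Reach A y x := by
  induction hxz using Relation.ReflTransGen.head_induction_on with
  | refl => exact Or.inr hyz
  | head harc hr ih =>
    rename_i a c
    rcases ih with h1 | h1
    · exact Or.inl (Relation.ReflTransGen.head harc h1)
    · rcases Relation.ReflTransGen.cases_tail h1 with h2 | ⟨d, hyd, hd⟩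
      · subst h2
        exact Or.inl (Relation.ReflTransGen.single harc)
      · have : d = a := by
          have := A.injR _ hd _ harc rfl
          exact congrArg Prod.fst this
        subst this
        exact Or.inr hyd

/-- The elements with no incoming arc. -/
def starts (A : ArcSys m) : Finset ℕ :=
  (Finset.Icc 1 m).filter (fun x => ∀ p ∈ A.arcs, p.2 ≠ x)

/-- The block generated by an element. -/
def blk (A : ArcSys m) (x : ℕ) : Finset ℕ :=
  (Finset.Icc 1 m).filter (fun y => Reach A x y)

lemma mem_blk {A : ArcSys m} {x y : ℕ} :
    y ∈ blk A x ↔ y ∈ Finset.Icc 1 m ∧ Reach A x y := mem_filter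

lemma exists_start {A : ArcSys m} :
    ∀ y, y ∈ Finset.Icc 1 m → ∃ x ∈ starts A, Reach A x y := by
  intro y
  induction y using Nat.strong_induction_on with
  | _ y IH =>
    intro hy
    by_cases hs : y ∈ starts A
    · exact ⟨y, hs, Relation.ReflTransGen.refl⟩
    · have : ∃ p ∈ A.arcs, p.2 = y := by
        simp only [starts, mem_filter, hy, true_and] at hs
        push_neg at hs
        exact hs
      obtain ⟨p, hp, hp2⟩ := this
      have hlt : p.1 < y := hp2 ▸ A.lt' _ hp
      obtain ⟨x, hx, hr⟩ := IH p.1 hlt (A.mem1 _ hp)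
      refine ⟨x, hx, hr.tail ?_⟩
      rw [← hp2]
      exact hp

lemma start_unique {A : ArcSys m} {x x' z : ℕ} (hx : x ∈ starts A) (hx' : x' ∈ starts A)
    (h1 : Reach A x z) (h2 : Reach A x' z) : x = x' := by
  have key : ∀ u v : ℕ, u ∈ starts A → v ∈ starts A → Reach A u v → u = v := by
    intro u v hu hv hr
    rcases Relation.ReflTransGen.cases_tail hr with h | ⟨d, _, hd⟩
    · exact h.symm
    · exact absurd rfl ((mem_filter.1 hv).2 _ hd)
  rcases reach_anc h1 h2 with h | h
  · exact key _ _ hx hx' h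
  · exact (key _ _ hx' hx h).symm

/-- The partition associated to an arc system. -/
def toP (A : ArcSys m) : Finpartition (Finset.Icc 1 m) where
  parts := (starts A).image (fun x => blk A x)
  supIndep := by
    rw [Finset.supIndep_iff_pairwiseDisjoint]
    rintro b1 h1 b2 h2 hne
    simp only [Function.onFun, id_eq]
    simp only [Finset.coe_image, Set.mem_image] at h1 h2
    obtain ⟨x1, hx1, rfl⟩ := h1
    obtain ⟨x2, hx2, rfl⟩ := h2
    rw [Finset.disjoint_left]
    intro z hz1 hz2
    rw [mem_blk] at hz1 hz2
    have hx1' : x1 ∈ starts A := by simpa using hx1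
    have hx2' : x2 ∈ starts A := by simpa using hx2
    exact hne (by rw [start_unique hx1' hx2' hz1.2 hz2.2])
  sup_parts := by
    apply le_antisymm
    · apply Finset.sup_le
      intro b hb
      obtain ⟨x, _, rfl⟩ := Finset.mem_image.1 hb
      exact Finset.filter_subset _ _
    · intro y hy
      obtain ⟨x, hx, hr⟩ := exists_start y hy
      have : y ∈ blk A x := mem_blk.2 ⟨hy, hr⟩
      exact Finset.mem_sup.2 ⟨blk A x, Finset.mem_image_of_mem _ hx, this⟩
  bot_notMem := by
    intro h
    obtain ⟨x, hx, hblk⟩ := Finset.mem_image.1 h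
    have hxI : x ∈ Finset.Icc 1 m := mem_of_mem_filter _ hx
    have : x ∈ blk A x := mem_blk.2 ⟨hxI, Relation.ReflTransGen.refl⟩
    rw [hblk] at this
    simp at this

lemma isArc_toP {A : ArcSys m} {a b : ℕ} : IsArc (toP A) a b ↔ (a, b) ∈ A.arcs := by
  constructor
  · rintro ⟨hab, B, hB, haB, hbB, hbet⟩
    obtain ⟨x, hx, rfl⟩ := Finset.mem_image.1 hB
    have hxs : x ∈ starts A := hx
    rw [mem_blk] at haB hbB
    rcases reach_total haB.2 hbB.2 with hr | hr
    · rcases Relation.ReflTransGen.cases_head hr with h | ⟨c, hc, hcb⟩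
      · omega
      · have hcB : c ∈ blk A x := mem_blk.2 ⟨A.mem2 _ hc, haB.2.tail hc⟩
        have hac : a < c := A.lt' _ hc
        have := hbet c hcB
        have hcb' : c ≤ b := reach_le hcb
        have : c = b := by
          by_contra hne
          exact this ⟨hac, lt_of_le_of_ne hcb' hne⟩
        subst this
        exact hc
    · have := reach_le hr
      omega
  · intro h
    refine ⟨A.lt' _ h, ?_⟩
    obtain ⟨x, hx, hr⟩ := exists_start a (A.mem1 _ h)
    refine ⟨blk A x, Finset.mem_image_of_mem _ hx, mem_blk.2 ⟨A.mem1 _ h, hr⟩,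
      mem_blk.2 ⟨A.mem2 _ h, hr.tail h⟩, ?_⟩
    rintro c hc ⟨hac, hcb⟩
    rw [mem_blk] at hc
    rcases reach_total hr hc.2 with h1 | h1
    · rcases Relation.ReflTransGen.cases_head h1 with h2 | ⟨d, hd, hdc⟩
      · omega
      · have : d = b := by
          have := A.injL _ hd _ h rfl
          exact congrArg Prod.snd this
        subst this
        have := reach_le hdc
        omega
    · have := reach_le h1
      omega

lemma singleton_toP {A : ArcSys m} {a : ℕ} :
    {a} ∈ (toP A).parts ↔ a ∈ Finset.Icc 1 m ∧ ∀ p ∈ A.arcs, p.1 ≠ a ∧ p.2 ≠ a := by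
  constructor
  · intro h
    have haI : a ∈ Finset.Icc 1 m := (toP A).le h (Finset.mem_singleton_self a)
    refine ⟨haI, ?_⟩
    rintro ⟨u, v⟩ hp
    have harc : IsArc (toP A) u v := isArc_toP.2 hp
    obtain ⟨hlt, B, hB, huB, hvB, _⟩ := harc
    constructor
    · rintro rfl
      have : ({u} : Finset ℕ) = B := (toP A).eq_of_mem_parts h hB (Finset.mem_singleton_self u) huB
      rw [← this] at hvB
      simp at hvB
      omega
    · rintro rfl
      have : ({v} : Finset ℕ) = B := (toP A).eq_of_mem_parts h hB (Finset.mem_singleton_self v) hvB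
      rw [← this] at huB
      simp at huB
      omega
  · rintro ⟨haI, hun⟩
    have hs : a ∈ starts A := by
      rw [starts, mem_filter]
      exact ⟨haI, fun p hp => (hun p hp).2⟩
    have hblk : blk A a = {a} := by
      apply Finset.ext
      intro y
      rw [mem_blk, Finset.mem_singleton]
      constructor
      · rintro ⟨hy, hr⟩
        rcases Relation.ReflTransGen.cases_head hr with h | ⟨c, hc, _⟩
        · exact h.symm
        · exact absurd rfl (hun _ hc).1
      · rintro rfl
        exact ⟨haI, Relation.ReflTransGen.refl⟩
    rw [← hblk]
    exact Finset.mem_image_of_mem _ hs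

lemma isArc_right_unique {s : Finset ℕ} {π : Finpartition s} {a b b' : ℕ}
    (h1 : IsArc π a b) (h2 : IsArc π a b') : b = b' := by
  obtain ⟨hab, B, hB, haB, hbB, hbet⟩ := h1
  obtain ⟨hab', B', hB', haB', hbB', hbet'⟩ := h2
  have hBB : B = B' := π.eq_of_mem_parts hB hB' haB haB'
  subst hBB
  rcases lt_trichotomy b b' with h | h | h
  · exact absurd ⟨hab, h⟩ (hbet' b hbB)
  · exact h
  · exact absurd ⟨hab', h⟩ (hbet b' hbB')

lemma isArc_left_unique {s : Finset ℕ} {π : Finpartition s} {a a' b : ℕ}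
    (h1 : IsArc π a b) (h2 : IsArc π a' b) : a = a' := by
  obtain ⟨hab, B, hB, haB, hbB, hbet⟩ := h1
  obtain ⟨hab', B', hB', haB', hbB', hbet'⟩ := h2
  have hBB : B = B' := π.eq_of_mem_parts hB hB' hbB hbB'
  subst hBB
  rcases lt_trichotomy a a' with h | h | h
  · exact absurd ⟨h, hab'⟩ (hbet a' haB')
  · exact h
  · exact absurd ⟨h, hab⟩ (hbet' a haB)

/-- The arc system of a partition. -/
def fromP (π : Finpartition (Finset.Icc 1 m)) : ArcSys m where
  arcs := ((Finset.Icc 1 m) ×ˢ (Finset.Icc 1 m)).filter (fun p => IsArc π p.1 p.2)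
  lt' := fun p hp => (mem_filter.1 hp).2.1
  mem1 := fun p hp => (Finset.mem_product.1 (mem_filter.1 hp).1).1
  mem2 := fun p hp => (Finset.mem_product.1 (mem_filter.1 hp).1).2
  injL := by
    rintro p hp q hq h
    have h1 := (mem_filter.1 hp).2
    have h2 := (mem_filter.1 hq).2
    rw [h] at h1
    have := isArc_right_unique h1 h2
    exact Prod.ext h this
  injR := by
    rintro p hp q hq h
    have h1 := (mem_filter.1 hp).2
    have h2 := (mem_filter.1 hq).2
    rw [h] at h1
    have := isArc_left_unique h1 h2
    exact Prod.ext this h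

lemma mem_fromP {π : Finpartition (Finset.Icc 1 m)} {a b : ℕ} :
    (a, b) ∈ (fromP π).arcs ↔ IsArc π a b := by
  rw [fromP]
  simp only [mem_filter, Finset.mem_product]
  constructor
  · exact fun h => h.2
  · rintro ⟨hlt, B, hB, haB, hbB, hbet⟩
    exact ⟨⟨π.le hB haB, π.le hB hbB⟩, hlt, B, hB, haB, hbB, hbet⟩

lemma fromP_toP (A : ArcSys m) : fromP (toP A) = A := by
  apply ArcSys.ext'
  apply Finset.ext
  rintro ⟨a, b⟩
  rw [mem_fromP, isArc_toP]

theorem eq_of_isArc_iff {s : Finset ℕ} (π π' : Finpartition s)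
    (h : ∀ a b, IsArc π a b ↔ IsArc π' a b) : π = π' := by
  have aux : ∀ (π π' : Finpartition s), (∀ a b, IsArc π a b ↔ IsArc π' a b) →
      ∀ P ∈ π.parts, ∀ P' ∈ π'.parts, ∀ x, x ∈ P → x ∈ P' → P ⊆ P' := by
    intro π π' hiff P hP P' hP' x hxP hxP'
    have claim_up : ∀ y, x ≤ y → y ∈ P → y ∈ P' := by
      intro y
      induction y using Nat.strong_induction_on with
      | _ y IH =>
        intro hxy hyP
        rcases eq_or_lt_of_le hxy with rfl | hlt
        · exact hxP'
        · have hne : (P.filter (fun w => x ≤ w ∧ w < y)).Nonempty :=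
            ⟨x, mem_filter.2 ⟨hxP, le_refl x, hlt⟩⟩
          set z := (P.filter (fun w => x ≤ w ∧ w < y)).max' hne with hzdef
          have hzmem := (P.filter (fun w => x ≤ w ∧ w < y)).max'_mem hne
          rw [mem_filter] at hzmem
          obtain ⟨hzP, hxz, hzy⟩ := hzmem
          have harc : IsArc π z y := by
            refine ⟨hzy, P, hP, hzP, hyP, ?_⟩
            rintro w hw ⟨hzw, hwy⟩
            have : w ∈ P.filter (fun w => x ≤ w ∧ w < y) :=
              mem_filter.2 ⟨hw, hxz.trans (le_of_lt hzw), hwy⟩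
            have := Finset.le_max' _ _ this
            omega
          have hzP' : z ∈ P' := IH z hzy hxz hzP
          obtain ⟨_, Q, hQ, hzQ, hyQ, _⟩ := (hiff z y).1 harc
          have : Q = P' := π'.eq_of_mem_parts hQ hP' hzQ hzP'
          rw [← this]
          exact hyQ
    have claim_down : ∀ d y, y ∈ P → x = y + d → y ∈ P' := by
      intro d
      induction d using Nat.strong_induction_on with
      | _ d IH =>
        intro y hyP hxy
        rcases Nat.eq_zero_or_pos d with rfl | hd
        · have : y = x := by omega
          subst this; exact hxP'
        · have hyx : y < x := by omega
          have hne : (P.filter (fun w => y < w ∧ w ≤ x)).Nonempty :=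
            ⟨x, mem_filter.2 ⟨hxP, hyx, le_refl x⟩⟩
          set z := (P.filter (fun w => y < w ∧ w ≤ x)).min' hne with hzdef
          have hzmem := (P.filter (fun w => y < w ∧ w ≤ x)).min'_mem hne
          rw [mem_filter] at hzmem
          obtain ⟨hzP, hyz, hzx⟩ := hzmem
          have harc : IsArc π y z := by
            refine ⟨hyz, P, hP, hyP, hzP, ?_⟩
            rintro w hw ⟨hyw, hwz⟩
            have : w ∈ P.filter (fun w => y < w ∧ w ≤ x) :=
              mem_filter.2 ⟨hw, hyw, (le_of_lt hwz).trans hzx⟩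
            have := Finset.min'_le _ _ this
            omega
          have hzP' : z ∈ P' := IH (x - z) (by omega) z hzP (by omega)
          obtain ⟨_, Q, hQ, hyQ, hzQ, _⟩ := (hiff y z).1 harc
          have : Q = P' := π'.eq_of_mem_parts hQ hP' hzQ hzP'
          rw [← this]
          exact hyQ
    intro y hyP
    rcases le_total x y with hle | hle
    · exact claim_up y hle hyP
    · exact claim_down (x - y) y hyP (by omega)
  have main : ∀ (π π' : Finpartition s), (∀ a b, IsArc π a b ↔ IsArc π' a b) →
      ∀ P ∈ π.parts, P ∈ π'.parts := by
    intro π π' h P hP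
    obtain ⟨x, hxP⟩ := π.nonempty_of_mem_parts hP
    have hxs : x ∈ s := π.le hP hxP
    have hP'mem := π'.part_mem.2 hxs
    have hxP' := π'.mem_part hxs
    have h1 : P ⊆ π'.part x := aux π π' h P hP _ hP'mem x hxP hxP'
    have h2 : π'.part x ⊆ P := aux π' π (fun a b => (h a b).symm) _ hP'mem P hP x hxP' hxP
    rw [Finset.Subset.antisymm h1 h2]
    exact hP'mem
  apply Finpartition.ext
  apply Finset.ext
  intro P
  exact ⟨main π π' h P, main π' π (fun a b => (h a b).symm) P⟩

lemma toP_fromP (π : Finpartition (Finset.Icc 1 m)) : toP (fromP π) = π := by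
  apply eq_of_isArc_iff
  intro a b
  rw [isArc_toP, mem_fromP]


/-! ### Crossings on arc systems -/

def LEs (A : ArcSys m) : Finset ℕ := A.arcs.image Prod.fst
def REs (A : ArcSys m) : Finset ℕ := A.arcs.image Prod.snd

lemma mem_LEs {A : ArcSys m} {x : ℕ} : x ∈ LEs A ↔ ∃ p ∈ A.arcs, p.1 = x := by
  simp [LEs]

lemma mem_REs {A : ArcSys m} {x : ℕ} : x ∈ REs A ↔ ∃ p ∈ A.arcs, p.2 = x := by
  simp [REs]

def earcs (A : ArcSys m) : Finset (ℕ × ℕ) :=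
  A.arcs ∪ ((Finset.Icc 1 m).filter (fun x => x ∉ LEs A ∧ x ∉ REs A)).image (fun x => (x, x))

lemma mem_earcs {A : ArcSys m} {p : ℕ × ℕ} :
    p ∈ earcs A ↔ p ∈ A.arcs ∨
      (p.1 = p.2 ∧ p.1 ∈ Finset.Icc 1 m ∧ p.1 ∉ LEs A ∧ p.1 ∉ REs A) := by
  rw [earcs, Finset.mem_union]
  constructor
  · rintro (h | h)
    · exact Or.inl h
    · obtain ⟨x, hx, rfl⟩ := Finset.mem_image.1 h
      rw [mem_filter] at hx
      exact Or.inr ⟨rfl, hx.1, hx.2⟩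
  · rintro (h | ⟨heq, hI, hL, hR⟩)
    · exact Or.inl h
    · right
      refine Finset.mem_image.2 ⟨p.1, mem_filter.2 ⟨hI, hL, hR⟩, ?_⟩
      exact Prod.ext rfl heq

lemma earcs_fst_le_snd {A : ArcSys m} {p : ℕ × ℕ} (h : p ∈ earcs A) : p.1 ≤ p.2 := by
  rcases mem_earcs.1 h with h | h
  · exact le_of_lt (A.lt' _ h)
  · omega

lemma earcs_injL {A : ArcSys m} {x y y' : ℕ} (h : (x, y) ∈ earcs A) (h' : (x, y') ∈ earcs A) :
    y = y' := by
  rcases mem_earcs.1 h with h1 | h1 <;> rcases mem_earcs.1 h' with h2 | h2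
  · exact congrArg Prod.snd (A.injL _ h1 _ h2 rfl)
  · exact absurd (mem_LEs.2 ⟨(x, y), h1, rfl⟩) h2.2.2.1
  · exact absurd (mem_LEs.2 ⟨(x, y'), h2, rfl⟩) h1.2.2.1
  · simp only [] at h1 h2
    omega

lemma earcs_injR {A : ArcSys m} {x x' y : ℕ} (h : (x, y) ∈ earcs A) (h' : (x', y) ∈ earcs A) :
    x = x' := by
  rcases mem_earcs.1 h with h1 | h1 <;> rcases mem_earcs.1 h' with h2 | h2
  · exact congrArg Prod.fst (A.injR _ h1 _ h2 rfl)
  · have hth : y ∈ REs A := mem_REs.2 ⟨(x, y), h1, rfl⟩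
    have heq2 : x' = y := h2.1
    have hR2 : x' ∉ REs A := h2.2.2.2
    exact absurd hth (heq2 ▸ hR2)
  · have hth : y ∈ REs A := mem_REs.2 ⟨(x', y), h2, rfl⟩
    have heq2 : x = y := h1.1
    have hR2 : x ∉ REs A := h1.2.2.2
    exact absurd hth (heq2 ▸ hR2)
  · simp only [] at h1 h2
    omega

def ClA (A : ArcSys m) (k : ℕ) : Prop :=
  ∃ a b : Fin k → ℕ, StrictMono a ∧ StrictMono b ∧
    (∀ i j, a i < b j) ∧ ∀ i, (a i, b i) ∈ A.arcs

def EnA (A : ArcSys m) (k : ℕ) : Prop :=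
  ∃ a b : Fin k → ℕ, StrictMono a ∧ StrictMono b ∧
    (∀ i j, a i ≤ b j) ∧ ∀ i, (a i, b i) ∈ earcs A

lemma EnA_congr {m m' : ℕ} (h : m = m') {A : ArcSys m} {A' : ArcSys m'} {k : ℕ}
    (harcs : A.arcs = A'.arcs) : EnA A k ↔ EnA A' k := by
  subst h
  rw [ArcSys.ext' harcs]

lemma clCross_toP {A : ArcSys m} {k : ℕ} : ClCross (toP A) k ↔ ClA A k := by
  constructor <;> rintro ⟨a, b, h1, h2, h3, h4⟩ <;>
    exact ⟨a, b, h1, h2, h3, fun i => by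
      first
        | exact isArc_toP.1 (h4 i)
        | exact isArc_toP.2 (h4 i)⟩

lemma isEArc_toP {A : ArcSys m} {a b : ℕ} : IsEArc (toP A) a b ↔ (a, b) ∈ earcs A := by
  constructor
  · rintro (h | ⟨rfl, hsing⟩)
    · exact mem_earcs.2 (Or.inl (isArc_toP.1 h))
    · obtain ⟨hI, hun⟩ := singleton_toP.1 hsing
      refine mem_earcs.2 (Or.inr ⟨rfl, hI, ?_, ?_⟩)
      · rw [mem_LEs]
        rintro ⟨p, hp, hp1⟩
        exact (hun p hp).1 hp1
      · rw [mem_REs]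
        rintro ⟨p, hp, hp2⟩
        exact (hun p hp).2 hp2
  · intro h
    rcases mem_earcs.1 h with h1 | h1
    · exact Or.inl (isArc_toP.2 h1)
    · simp only [] at h1
      obtain ⟨heq, hI, hL, hR⟩ := h1
      refine Or.inr ⟨heq, singleton_toP.2 ⟨hI, ?_⟩⟩
      intro p hp
      constructor
      · intro hc
        exact hL (mem_LEs.2 ⟨p, hp, hc⟩)
      · intro hc
        exact hR (mem_REs.2 ⟨p, hp, hc⟩)

lemma enhCross_toP {A : ArcSys m} {k : ℕ} : EnhCross (toP A) k ↔ EnA A k := by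
  constructor <;> rintro ⟨a, b, h1, h2, h3, h4⟩ <;>
    exact ⟨a, b, h1, h2, h3, fun i => by
      first
        | exact isEArc_toP.1 (h4 i)
        | exact isEArc_toP.2 (h4 i)⟩

instance : Finite (ArcSys m) := by
  apply Finite.of_injective
    (fun A => (⟨A.arcs, by
      rw [Finset.mem_powerset]
      intro p hp
      exact Finset.mem_product.2 ⟨A.mem1 _ hp, A.mem2 _ hp⟩⟩ :
      ↥((Finset.Icc 1 m ×ˢ Finset.Icc 1 m).powerset)))
  intro A B h
  exact ArcSys.ext' (congrArg Subtype.val h)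

def equivSub {Q : Finpartition (Finset.Icc 1 m) → Prop} {Q' : ArcSys m → Prop}
    (hQ : ∀ A, Q (toP A) ↔ Q' A) :
    {π : Finpartition (Finset.Icc 1 m) // Q π} ≃ {A : ArcSys m // Q' A} where
  toFun p := ⟨fromP p.1, by rw [← hQ, toP_fromP]; exact p.2⟩
  invFun a := ⟨toP a.1, (hQ _).2 a.2⟩
  left_inv p := Subtype.ext (toP_fromP p.1)
  right_inv a := Subtype.ext (fromP_toP a.1)

lemma card_cl (m k : ℕ) :
    Nat.card {π : Finpartition (Finset.Icc 1 m) // ¬ ClCross π k} =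
      Nat.card {A : ArcSys m // ¬ ClA A k} :=
  Nat.card_congr (equivSub (fun A => not_congr clCross_toP))

lemma card_enh (m k : ℕ) :
    Nat.card {π : Finpartition (Finset.Icc 1 m) // ¬ EnhCross π k} =
      Nat.card {A : ArcSys m // ¬ EnA A k} :=
  Nat.card_congr (equivSub (fun A => not_congr enhCross_toP))


/-! ### The kept set, rank function and chase function -/

variable {n : ℕ}

def kept (n : ℕ) (B : Finset ℕ) : Finset ℕ := Finset.Icc 1 (n+1) \ B

def rk (n : ℕ) (B : Finset ℕ) (x : ℕ) : ℕ := ((kept n B).filter (fun w => w ≤ x)).card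

def chase (n : ℕ) (B : Finset ℕ) (v : ℕ) : ℕ :=
  (insert (n+1) ((kept n B).filter (fun w => v ≤ w))).min' (Finset.insert_nonempty _ _)

lemma mem_kept {B : Finset ℕ} {x : ℕ} : x ∈ kept n B ↔ (1 ≤ x ∧ x ≤ n + 1 ∧ x ∉ B) := by
  simp [kept, Finset.mem_sdiff, Finset.mem_Icc, and_assoc]

lemma top_mem_kept {B : Finset ℕ} (hB : B ⊆ Finset.Icc 1 n) : n + 1 ∈ kept n B := by
  rw [mem_kept]
  refine ⟨by omega, le_refl _, fun hc => ?_⟩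
  have := hB hc
  rw [Finset.mem_Icc] at this
  omega

lemma card_bad_le {B : Finset ℕ} (hB : B ⊆ Finset.Icc 1 n) : B.card ≤ n := by
  have := Finset.card_le_card hB
  simpa using this

lemma card_kept {B : Finset ℕ} (hB : B ⊆ Finset.Icc 1 n) :
    (kept n B).card = n + 1 - B.card := by
  rw [kept, Finset.card_sdiff_of_subset]
  · simp
  · exact hB.trans (Finset.Icc_subset_Icc_right (by omega))

lemma filter_le_sub {B : Finset ℕ} {x y : ℕ} (h : x ≤ y) :
    (kept n B).filter (fun w => w ≤ x) ⊆ (kept n B).filter (fun w => w ≤ y) := by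
  intro w hw
  rw [Finset.mem_filter] at hw ⊢
  exact ⟨hw.1, hw.2.trans h⟩

lemma rk_mono {B : Finset ℕ} {x y : ℕ} (h : x ≤ y) : rk n B x ≤ rk n B y :=
  Finset.card_le_card (filter_le_sub h)

lemma rk_lt {B : Finset ℕ} {x y : ℕ} (hy : y ∈ kept n B) (hxy : x < y) :
    rk n B x < rk n B y := by
  apply Finset.card_lt_card
  rw [Finset.ssubset_iff_of_subset (filter_le_sub (by omega))]
  exact ⟨y, Finset.mem_filter.2 ⟨hy, le_refl _⟩, fun hc => by
    simp only [Finset.mem_filter] at hc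
    omega⟩

lemma rk_inj {B : Finset ℕ} {x y : ℕ} (hx : x ∈ kept n B) (hy : y ∈ kept n B)
    (h : rk n B x = rk n B y) : x = y := by
  rcases lt_trichotomy x y with hc | hc | hc
  · have := rk_lt hy hc; omega
  · exact hc
  · have := rk_lt hx hc; omega

lemma rk_lt_reflect {B : Finset ℕ} {x y : ℕ} (hx : x ∈ kept n B)
    (h : rk n B x < rk n B y) : x < y := by
  by_contra hc
  push_neg at hc
  have := rk_mono (n := n) (B := B) hc
  omega

lemma rk_pos {B : Finset ℕ} {x : ℕ} (hx : x ∈ kept n B) : 1 ≤ rk n B x := by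
  rw [rk, Nat.one_le_iff_ne_zero, ← Nat.pos_iff_ne_zero, Finset.card_pos]
  exact ⟨x, Finset.mem_filter.2 ⟨hx, le_refl _⟩⟩

lemma rk_le_card {B : Finset ℕ} {x : ℕ} : rk n B x ≤ (kept n B).card :=
  Finset.card_le_card (Finset.filter_subset _ _)

lemma rk_top {B : Finset ℕ} (hB : B ⊆ Finset.Icc 1 n) :
    rk n B (n+1) = (kept n B).card := by
  rw [rk]
  congr 1
  apply Finset.filter_true_of_mem
  intro w hw
  rw [mem_kept] at hw
  omega

lemma chase_mem {B : Finset ℕ} (hB : B ⊆ Finset.Icc 1 n) (v : ℕ) :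
    chase n B v ∈ kept n B := by
  have := Finset.min'_mem (insert (n+1) ((kept n B).filter (fun w => v ≤ w)))
    (Finset.insert_nonempty _ _)
  rw [Finset.mem_insert] at this
  rcases this with h | h
  · rw [chase, h]; exact top_mem_kept hB
  · exact Finset.mem_of_mem_filter _ h

lemma le_chase {B : Finset ℕ} {v : ℕ} (hv : v ≤ n + 1) : v ≤ chase n B v := by
  apply Finset.le_min'
  intro y hy
  rw [Finset.mem_insert] at hy
  rcases hy with rfl | hy
  · exact hv
  · exact (Finset.mem_filter.1 hy).2

lemma chase_le {B : Finset ℕ} {v w : ℕ} (hw : w ∈ kept n B) (hvw : v ≤ w) :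
    chase n B v ≤ w := by
  apply Finset.min'_le
  rw [Finset.mem_insert]
  exact Or.inr (Finset.mem_filter.2 ⟨hw, hvw⟩)

lemma chase_eq_self {B : Finset ℕ} {v : ℕ} (hv : v ∈ kept n B) : chase n B v = v := by
  have h1 : v ≤ n + 1 := (mem_kept.1 hv).2.1
  exact le_antisymm (chase_le hv (le_refl _)) (le_chase h1)

lemma no_kept_between {B : Finset ℕ} {v w : ℕ} (hw : w ∈ kept n B)
    (h1 : v ≤ w) (h2 : w < chase n B v) : False := by
  have := chase_le hw h1
  omega

lemma rk_chase {B : Finset ℕ} (hB : B ⊆ Finset.Icc 1 n) {v : ℕ}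
    (hv1 : v - 1 ∈ kept n B) (hv : 1 ≤ v) (hvn : v ≤ n + 1) :
    rk n B (chase n B v) = rk n B (v - 1) + 1 := by
  have hcm : chase n B v ∈ kept n B := chase_mem hB v
  have hvc : v ≤ chase n B v := le_chase hvn
  have key : (kept n B).filter (fun w => w ≤ chase n B v) =
      insert (chase n B v) ((kept n B).filter (fun w => w ≤ v - 1)) := by
    apply Finset.ext
    intro w
    rw [Finset.mem_insert, Finset.mem_filter, Finset.mem_filter]
    constructor
    · rintro ⟨hwk, hwle⟩
      rcases eq_or_lt_of_le hwle with h | h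
      · exact Or.inl h
      · right
        refine ⟨hwk, ?_⟩
        by_contra hc
        exact no_kept_between hwk (by omega) h
    · rintro (rfl | ⟨hwk, hwle⟩)
      · exact ⟨hcm, le_refl _⟩
      · exact ⟨hwk, by omega⟩
  rw [rk, rk, key, Finset.card_insert_of_notMem]
  intro hc
  rw [Finset.mem_filter] at hc
  omega

lemma rk_surj {B : Finset ℕ} (hB : B ⊆ Finset.Icc 1 n) :
    ∀ c, 1 ≤ c → c ≤ (kept n B).card → ∃ x ∈ kept n B, rk n B x = c := by
  intro c
  induction c with
  | zero => omega
  | succ c IH =>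
    intro _ hle
    rcases Nat.eq_zero_or_pos c with rfl | hc
    · -- c + 1 = 1 : take the minimum, which is chase of 1
      refine ⟨chase n B 1, chase_mem hB 1, ?_⟩
      have hcm := chase_mem hB 1
      have key : (kept n B).filter (fun w => w ≤ chase n B 1) = {chase n B 1} := by
        apply Finset.ext
        intro w
        rw [Finset.mem_filter, Finset.mem_singleton]
        constructor
        · rintro ⟨hwk, hwle⟩
          rcases eq_or_lt_of_le hwle with h | h
          · exact h
          · exfalso
            exact no_kept_between hwk (by
              have := (mem_kept.1 hwk).1
              omega) h
        · rintro rfl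
          exact ⟨hcm, le_refl _⟩
      rw [rk, key, Finset.card_singleton]
    · obtain ⟨x, hx, hrx⟩ := IH hc (by omega)
      have hxtop : x ≠ n + 1 := by
        intro hc2
        rw [hc2, rk_top hB] at hrx
        omega
      have hxn : x + 1 ≤ n + 1 := by
        have := (mem_kept.1 hx).2.1
        omega
      refine ⟨chase n B (x+1), chase_mem hB _, ?_⟩
      have := rk_chase hB (v := x + 1) (by simpa using hx) (by omega) hxn
      simpa [hrx] using this

/-! ### Bad elements, contraction and expansion -/

def bad (σ : ArcSys (n+1)) : Finset ℕ :=
  (Finset.Icc 1 n).filter (fun j => j ∉ LEs σ ∧ j + 1 ∉ REs σ)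

lemma bad_subset (σ : ArcSys (n+1)) : bad σ ⊆ Finset.Icc 1 n := Finset.filter_subset _ _

lemma mem_bad {σ : ArcSys (n+1)} {j : ℕ} :
    j ∈ bad σ ↔ j ∈ Finset.Icc 1 n ∧ j ∉ LEs σ ∧ j + 1 ∉ REs σ := Finset.mem_filter

lemma card_kept_succ {B : Finset ℕ} (hB : B ⊆ Finset.Icc 1 n) :
    (kept n B).card = (n - B.card) + 1 := by
  rw [card_kept hB]
  have := card_bad_le hB
  omega

lemma arc_fst_kept {σ : ArcSys (n+1)} {p : ℕ × ℕ} (hp : p ∈ σ.arcs) :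
    p.1 ∈ kept n (bad σ) := by
  have h1 := σ.mem1 _ hp
  rw [Finset.mem_Icc] at h1
  rw [mem_kept]
  refine ⟨h1.1, h1.2, fun hc => ?_⟩
  exact (mem_bad.1 hc).2.1 (mem_LEs.2 ⟨p, hp, rfl⟩)

lemma arc_snd_ge2 {σ : ArcSys (n+1)} {p : ℕ × ℕ} (hp : p ∈ σ.arcs) : 2 ≤ p.2 := by
  have h1 := σ.mem1 _ hp
  have h2 := σ.lt' _ hp
  rw [Finset.mem_Icc] at h1
  omega

lemma arc_snd_le {σ : ArcSys (n+1)} {p : ℕ × ℕ} (hp : p ∈ σ.arcs) : p.2 ≤ n + 1 := by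
  have h2 := σ.mem2 _ hp
  rw [Finset.mem_Icc] at h2
  exact h2.2

lemma arc_snd_pred_kept {σ : ArcSys (n+1)} {p : ℕ × ℕ} (hp : p ∈ σ.arcs) :
    p.2 - 1 ∈ kept n (bad σ) := by
  have h1 := arc_snd_ge2 hp
  have h2 := arc_snd_le hp
  rw [mem_kept]
  refine ⟨by omega, by omega, fun hc => ?_⟩
  have := (mem_bad.1 hc).2.2
  have heq : p.2 - 1 + 1 = p.2 := by omega
  rw [heq] at this
  exact this (mem_REs.2 ⟨p, hp, rfl⟩)

lemma chase_inj_arcs {σ : ArcSys (n+1)} {p q : ℕ × ℕ} (hp : p ∈ σ.arcs) (hq : q ∈ σ.arcs)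
    (h : chase n (bad σ) p.2 = chase n (bad σ) q.2) : p.2 = q.2 := by
  have key : ∀ p q : ℕ × ℕ, p ∈ σ.arcs → q ∈ σ.arcs → p.2 < q.2 →
      chase n (bad σ) p.2 = chase n (bad σ) q.2 → False := by
    intro p q hp hq hlt heq
    have h1 : q.2 - 1 ∈ kept n (bad σ) := arc_snd_pred_kept hq
    have h2 : q.2 ≤ chase n (bad σ) q.2 := le_chase (arc_snd_le hq)
    have h3 : 2 ≤ q.2 := arc_snd_ge2 hq
    exact no_kept_between (v := p.2) h1 (by omega) (by omega)
  rcases lt_trichotomy p.2 q.2 with hc | hc | hc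
  · exact absurd (key p q hp hq hc h) (fun h => h)
  · exact hc
  · exact absurd (key q p hq hp hc h.symm) (fun h => h)

def Phi (σ : ArcSys (n+1)) (p : ℕ × ℕ) : ℕ × ℕ :=
  (rk n (bad σ) p.1, rk n (bad σ) (chase n (bad σ) p.2) - 1)

lemma rk_chase_arc {σ : ArcSys (n+1)} {p : ℕ × ℕ} (hp : p ∈ σ.arcs) :
    rk n (bad σ) (chase n (bad σ) p.2) = rk n (bad σ) (p.2 - 1) + 1 :=
  rk_chase (bad_subset σ) (arc_snd_pred_kept hp) (by have := arc_snd_ge2 hp; omega)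
    (arc_snd_le hp)

lemma rk_fst_lt_rk_chase {σ : ArcSys (n+1)} {p : ℕ × ℕ} (hp : p ∈ σ.arcs) :
    rk n (bad σ) p.1 < rk n (bad σ) (chase n (bad σ) p.2) :=
  rk_lt (chase_mem (bad_subset σ) _)
    (lt_of_lt_of_le (σ.lt' _ hp) (le_chase (arc_snd_le hp)))

lemma rk_fst_bound {σ : ArcSys (n+1)} {p : ℕ × ℕ} (hp : p ∈ σ.arcs) :
    1 ≤ rk n (bad σ) p.1 ∧ rk n (bad σ) p.1 ≤ n - (bad σ).card := by
  refine ⟨rk_pos (arc_fst_kept hp), ?_⟩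
  have h1 : p.1 < n + 1 := by
    have := σ.lt' _ hp
    have := arc_snd_le hp
    omega
  have h2 : rk n (bad σ) p.1 < rk n (bad σ) (n+1) :=
    rk_lt (top_mem_kept (bad_subset σ)) h1
  rw [rk_top (bad_subset σ), card_kept_succ (bad_subset σ)] at h2
  omega

lemma rk_chase_bound {σ : ArcSys (n+1)} {p : ℕ × ℕ} (hp : p ∈ σ.arcs) :
    2 ≤ rk n (bad σ) (chase n (bad σ) p.2) ∧
      rk n (bad σ) (chase n (bad σ) p.2) ≤ (n - (bad σ).card) + 1 := by
  constructor
  · have := rk_fst_lt_rk_chase hp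
    have := (rk_fst_bound hp).1
    omega
  · rw [← card_kept_succ (bad_subset σ)]
    exact rk_le_card

def contracted (σ : ArcSys (n+1)) : ArcSys (n - (bad σ).card) where
  arcs := (σ.arcs.image (Phi σ)).filter (fun q => q.1 < q.2)
  lt' := fun q hq => (Finset.mem_filter.1 hq).2
  mem1 := by
    intro q hq
    rw [Finset.mem_filter] at hq
    obtain ⟨hq1, hq2⟩ := hq
    obtain ⟨p, hp, rfl⟩ := Finset.mem_image.1 hq1
    rw [Finset.mem_Icc]
    exact (rk_fst_bound hp)
  mem2 := by
    intro q hq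
    rw [Finset.mem_filter] at hq
    obtain ⟨hq1, hq2⟩ := hq
    obtain ⟨p, hp, rfl⟩ := Finset.mem_image.1 hq1
    have hb := rk_chase_bound hp
    have hf := (rk_fst_bound hp).1
    rw [Finset.mem_Icc]
    unfold Phi at hq2 ⊢
    simp only [] at hq2 ⊢
    omega
  injL := by
    rintro q hq q' hq' h
    rw [Finset.mem_filter] at hq hq'
    obtain ⟨p, hp, rfl⟩ := Finset.mem_image.1 hq.1
    obtain ⟨p', hp', rfl⟩ := Finset.mem_image.1 hq'.1
    have h1 : p.1 = p'.1 := rk_inj (arc_fst_kept hp) (arc_fst_kept hp') h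
    rw [σ.injL _ hp _ hp' h1]
  injR := by
    rintro q hq q' hq' h
    rw [Finset.mem_filter] at hq hq'
    obtain ⟨p, hp, rfl⟩ := Finset.mem_image.1 hq.1
    obtain ⟨p', hp', rfl⟩ := Finset.mem_image.1 hq'.1
    have h2 : rk n (bad σ) (chase n (bad σ) p.2) = rk n (bad σ) (chase n (bad σ) p'.2) := by
      have b1 := (rk_chase_bound hp).1
      have b2 := (rk_chase_bound hp').1
      unfold Phi at h
      simp only [] at h
      omega
    have h3 : chase n (bad σ) p.2 = chase n (bad σ) p'.2 :=
      rk_inj (chase_mem (bad_subset σ) _) (chase_mem (bad_subset σ) _) h2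
    have h4 : p.2 = p'.2 := chase_inj_arcs hp hp' h3
    rw [σ.injR _ hp _ hp' h4]

lemma mem_contracted {σ : ArcSys (n+1)} {q : ℕ × ℕ} :
    q ∈ (contracted σ).arcs ↔ (∃ p ∈ σ.arcs, Phi σ p = q) ∧ q.1 < q.2 := by
  unfold contracted
  simp only [Finset.mem_filter, Finset.mem_image]

lemma phi_mem_earcs {σ : ArcSys (n+1)} {p : ℕ × ℕ} (hp : p ∈ σ.arcs) :
    Phi σ p ∈ earcs (contracted σ) := by
  by_cases h : (Phi σ p).1 < (Phi σ p).2
  · exact mem_earcs.2 (Or.inl (mem_contracted.2 ⟨⟨p, hp, rfl⟩, h⟩))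
  · have heq : (Phi σ p).1 = (Phi σ p).2 := by
      have h1 := rk_fst_lt_rk_chase hp
      unfold Phi at h ⊢
      simp only [] at h ⊢
      omega
    apply mem_earcs.2
    right
    refine ⟨heq, ?_, ?_, ?_⟩
    · rw [Finset.mem_Icc]
      exact rk_fst_bound hp
    · rw [mem_LEs]
      rintro ⟨q, hq, hq1⟩
      rw [mem_contracted] at hq
      obtain ⟨⟨p', hp', rfl⟩, hlt⟩ := hq
      have h1 : p'.1 = p.1 := rk_inj (arc_fst_kept hp') (arc_fst_kept hp) hq1
      have : p' = p := σ.injL _ hp' _ hp h1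
      subst this
      exact h hlt
    · rw [mem_REs]
      rintro ⟨q, hq, hq2⟩
      rw [mem_contracted] at hq
      obtain ⟨⟨p', hp', rfl⟩, hlt⟩ := hq
      have hcc : rk n (bad σ) (chase n (bad σ) p'.2) = rk n (bad σ) (chase n (bad σ) p.2) := by
        have b1 := (rk_chase_bound hp').1
        have b2 := (rk_chase_bound hp).1
        have hfst := rk_fst_lt_rk_chase hp
        unfold Phi at hq2 heq
        simp only [] at hq2 heq
        omega
      have h3 : chase n (bad σ) p'.2 = chase n (bad σ) p.2 :=
        rk_inj (chase_mem (bad_subset σ) _) (chase_mem (bad_subset σ) _) hcc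
      have h4 : p'.2 = p.2 := chase_inj_arcs hp' hp h3
      have : p' = p := σ.injR _ hp' _ hp h4
      subst this
      exact h hlt

lemma earcs_contracted (σ : ArcSys (n+1)) :
    earcs (contracted σ) = σ.arcs.image (Phi σ) := by
  apply Finset.ext
  intro q
  constructor
  · intro hq
    rcases mem_earcs.1 hq with h | h
    · rw [mem_contracted] at h
      obtain ⟨⟨p, hp, rfl⟩, _⟩ := h
      exact Finset.mem_image_of_mem _ hp
    · obtain ⟨heq, hI, hL, hR⟩ := h
      set x := q.1 with hxdef
      rw [Finset.mem_Icc] at hI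
      have hxcard : x ≤ (kept n (bad σ)).card := by
        rw [card_kept_succ (bad_subset σ)]
        omega
      obtain ⟨j, hj, hrj⟩ := rk_surj (bad_subset σ) x hI.1 hxcard
      have hjtop : j < n + 1 := by
        apply rk_lt_reflect hj
        rw [hrj, rk_top (bad_subset σ), card_kept_succ (bad_subset σ)]
        omega
      have hjI : j ∈ Finset.Icc 1 n := by
        rw [Finset.mem_Icc]
        have := (mem_kept.1 hj).1
        omega
      have hjnotbad : j ∉ bad σ := (mem_kept.1 hj).2.2
      rw [mem_bad] at hjnotbad
      push_neg at hjnotbad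
      by_cases hjL : j ∈ LEs σ
      · obtain ⟨p, hp, hp1⟩ := mem_LEs.1 hjL
        have hfst : (Phi σ p).1 = x := by
          unfold Phi
          simp only []
          rw [hp1, hrj]
        have hsnd : (Phi σ p).2 = x := by
          by_contra hc
          have hlt : (Phi σ p).1 < (Phi σ p).2 := by
            have h1 := rk_fst_lt_rk_chase hp
            unfold Phi at hc ⊢
            simp only [] at hc ⊢
            unfold Phi at hfst
            simp only [] at hfst
            omega
          have : (Phi σ p) ∈ (contracted σ).arcs := mem_contracted.2 ⟨⟨p, hp, rfl⟩, hlt⟩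
          exact hL (mem_LEs.2 ⟨Phi σ p, this, hfst⟩)
        have : Phi σ p = q := by
          apply Prod.ext
          · rw [hfst]
          · rw [hsnd]; exact heq
        rw [← this]
        exact Finset.mem_image_of_mem _ hp
      · have hjR : j + 1 ∈ REs σ := hjnotbad hjI hjL
        obtain ⟨p, hp, hp2⟩ := mem_REs.1 hjR
        have hsnd : (Phi σ p).2 = x := by
          unfold Phi
          simp only []
          have : chase n (bad σ) p.2 = chase n (bad σ) (j+1) := by rw [hp2]
          rw [this, rk_chase (bad_subset σ) (by simpa using hj) (by omega) (by omega)]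
          simp only [Nat.add_sub_cancel]
          rw [hrj]
        have hfst : (Phi σ p).1 = x := by
          by_contra hc
          have hlt : (Phi σ p).1 < (Phi σ p).2 := by
            have h1 := rk_fst_lt_rk_chase hp
            unfold Phi at hc hsnd ⊢
            simp only [] at hc hsnd ⊢
            omega
          have hmem : (Phi σ p) ∈ (contracted σ).arcs := mem_contracted.2 ⟨⟨p, hp, rfl⟩, hlt⟩
          exact hR (mem_REs.2 ⟨Phi σ p, hmem, hsnd⟩)
        have : Phi σ p = q := by
          apply Prod.ext
          · rw [hfst]
          · rw [hsnd]; exact heq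
        rw [← this]
        exact Finset.mem_image_of_mem _ hp
  · intro hq
    obtain ⟨p, hp, rfl⟩ := Finset.mem_image.1 hq
    exact phi_mem_earcs hp

lemma chase_mono' {B : Finset ℕ} (hB : B ⊆ Finset.Icc 1 n) {v v' : ℕ} (h : v ≤ v')
    (hv' : v' ≤ n + 1) : chase n B v ≤ chase n B v' :=
  chase_le (chase_mem hB v') (h.trans (le_chase hv'))

lemma clA_iff_enA (σ : ArcSys (n+1)) (k : ℕ) : ClA σ k ↔ EnA (contracted σ) k := by
  constructor
  · rintro ⟨a, b, ha, hb, hab, harc⟩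
    refine ⟨fun i => rk n (bad σ) (a i),
      fun i => rk n (bad σ) (chase n (bad σ) (b i)) - 1, ?_, ?_, ?_, ?_⟩
    · intro i j hij
      exact rk_lt (arc_fst_kept (harc j)) (ha hij)
    · intro i j hij
      show rk n (bad σ) (chase n (bad σ) (b i)) - 1 < rk n (bad σ) (chase n (bad σ) (b j)) - 1
      have h1 : chase n (bad σ) (b i) ≤ chase n (bad σ) (b j) :=
        chase_mono' (bad_subset σ) (le_of_lt (hb hij)) (arc_snd_le (harc j))
      have h2 : chase n (bad σ) (b i) ≠ chase n (bad σ) (b j) := by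
        intro hc
        have := chase_inj_arcs (harc i) (harc j) hc
        simp only [] at this
        exact absurd this (ne_of_lt (hb hij))
      have h3 : chase n (bad σ) (b i) < chase n (bad σ) (b j) := lt_of_le_of_ne h1 h2
      have h4 : rk n (bad σ) (chase n (bad σ) (b i)) < rk n (bad σ) (chase n (bad σ) (b j)) :=
        rk_lt (chase_mem (bad_subset σ) _) h3
      have b1 : 2 ≤ rk n (bad σ) (chase n (bad σ) (b i)) := (rk_chase_bound (harc i)).1
      have b2 : 2 ≤ rk n (bad σ) (chase n (bad σ) (b j)) := (rk_chase_bound (harc j)).1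
      omega
    · intro i j
      show rk n (bad σ) (a i) ≤ rk n (bad σ) (chase n (bad σ) (b j)) - 1
      have h1 : a i < chase n (bad σ) (b j) :=
        lt_of_lt_of_le (hab i j) (le_chase (arc_snd_le (harc j)))
      have h2 : rk n (bad σ) (a i) < rk n (bad σ) (chase n (bad σ) (b j)) :=
        rk_lt (chase_mem (bad_subset σ) _) h1
      omega
    · intro i
      exact phi_mem_earcs (harc i)
  · rintro ⟨x, y, hx, hy, hxy, hearc⟩
    have hmem : ∀ i, (x i, y i) ∈ σ.arcs.image (Phi σ) := by
      intro i
      rw [← earcs_contracted]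
      exact hearc i
    choose p hp hPhi using fun i => Finset.mem_image.1 (hmem i)
    have hfst : ∀ i, rk n (bad σ) ((p i).1) = x i := fun i => congrArg Prod.fst (hPhi i)
    have hsnd : ∀ i, rk n (bad σ) (chase n (bad σ) ((p i).2)) - 1 = y i :=
      fun i => congrArg Prod.snd (hPhi i)
    have hsnd' : ∀ i, rk n (bad σ) (chase n (bad σ) ((p i).2)) = y i + 1 := by
      intro i
      have := (rk_chase_bound (hp i)).1
      have := hsnd i
      omega
    refine ⟨fun i => (p i).1, fun i => (p i).2, ?_, ?_, ?_, ?_⟩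
    · intro i j hij
      apply rk_lt_reflect (arc_fst_kept (hp i))
      rw [hfst i, hfst j]
      exact hx hij
    · intro i j hij
      have h1 : chase n (bad σ) ((p i).2) < chase n (bad σ) ((p j).2) := by
        apply rk_lt_reflect (chase_mem (bad_subset σ) _)
        rw [hsnd' i, hsnd' j]
        have := hy hij
        omega
      by_contra hc
      push_neg at hc
      have := chase_mono' (bad_subset σ) hc (arc_snd_le (hp i))
      omega
    · intro i j
      have h1 : (p i).1 < chase n (bad σ) ((p j).2) := by
        apply rk_lt_reflect (arc_fst_kept (hp i))
        rw [hfst i, hsnd' j]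
        have := hxy i j
        omega
      by_contra hc
      push_neg at hc
      exact no_kept_between (v := (p j).2) (arc_fst_kept (hp i)) hc h1
    · intro i
      have : ((p i).1, (p i).2) = p i := rfl
      rw [this]
      exact hp i

/-! ### Expansion -/

def expand (n : ℕ) (B : Finset ℕ) (A : ArcSys (n - B.card)) : ArcSys (n+1) where
  arcs := ((Finset.Icc 1 (n+1)) ×ˢ (Finset.Icc 1 (n+1))).filter
    (fun p => p.1 ∈ kept n B ∧ 2 ≤ p.2 ∧ p.2 - 1 ∈ kept n B ∧
      (rk n B p.1, rk n B (p.2 - 1)) ∈ earcs A)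
  lt' := by
    intro p hp
    rw [Finset.mem_filter] at hp
    obtain ⟨hk1, h2, hk2, he⟩ := hp.2
    have hle : rk n B p.1 ≤ rk n B (p.2 - 1) := earcs_fst_le_snd he
    have : p.1 ≤ p.2 - 1 := by
      by_contra hc
      push_neg at hc
      have := rk_lt (n := n) (B := B) hk1 hc
      omega
    omega
  mem1 := fun p hp => (Finset.mem_product.1 (Finset.mem_filter.1 hp).1).1
  mem2 := fun p hp => (Finset.mem_product.1 (Finset.mem_filter.1 hp).1).2
  injL := by
    intro p hp q hq h
    rw [Finset.mem_filter] at hp hq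
    obtain ⟨hk1, h2, hk2, he⟩ := hp.2
    obtain ⟨hk1', h2', hk2', he'⟩ := hq.2
    rw [h] at he
    have := earcs_injL he he'
    have := rk_inj hk2 hk2' this
    apply Prod.ext h
    omega
  injR := by
    intro p hp q hq h
    rw [Finset.mem_filter] at hp hq
    obtain ⟨hk1, h2, hk2, he⟩ := hp.2
    obtain ⟨hk1', h2', hk2', he'⟩ := hq.2
    rw [h] at he
    have := earcs_injR he he'
    have := rk_inj hk1 hk1' this
    exact Prod.ext this h

lemma mem_expand {B : Finset ℕ} {A : ArcSys (n - B.card)} {p : ℕ × ℕ} :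
    p ∈ (expand n B A).arcs ↔ p.1 ∈ Finset.Icc 1 (n+1) ∧ p.2 ∈ Finset.Icc 1 (n+1) ∧
      p.1 ∈ kept n B ∧ 2 ≤ p.2 ∧ p.2 - 1 ∈ kept n B ∧
      (rk n B p.1, rk n B (p.2 - 1)) ∈ earcs A := by
  unfold expand
  simp only [Finset.mem_filter, Finset.mem_product]
  tauto

lemma expand_arc_exists {B : Finset ℕ} (hB : B ⊆ Finset.Icc 1 n) {A : ArcSys (n - B.card)}
    {x y : ℕ} (hxy : (x, y) ∈ earcs A) {j : ℕ} (hj : j ∈ kept n B) (hrj : rk n B j = x) :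
    ∃ w, w ∈ kept n B ∧ rk n B w = y ∧ w < n + 1 ∧ (j, w + 1) ∈ (expand n B A).arcs := by
  have hybound : 1 ≤ y ∧ y ≤ n - B.card := by
    rcases mem_earcs.1 hxy with h | h
    · have := A.mem2 _ h
      rw [Finset.mem_Icc] at this
      exact this
    · obtain ⟨heq, hI, _, _⟩ := h
      simp only [] at heq hI
      rw [Finset.mem_Icc] at hI
      omega
  have hycard : y ≤ (kept n B).card := by
    rw [card_kept_succ hB]
    omega
  obtain ⟨w, hw, hrw⟩ := rk_surj hB y hybound.1 hycard
  have hwtop : w < n + 1 := by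
    apply rk_lt_reflect hw
    rw [hrw, rk_top hB, card_kept_succ hB]
    omega
  have hw1 : 1 ≤ w := (mem_kept.1 hw).1
  refine ⟨w, hw, hrw, hwtop, ?_⟩
  rw [mem_expand]
  refine ⟨?_, ?_, hj, by omega, by simpa using hw, ?_⟩
  · rw [Finset.mem_Icc]
    have := (mem_kept.1 hj).1
    have := (mem_kept.1 hj).2.1
    omega
  · rw [Finset.mem_Icc]
    omega
  · have h1 : w + 1 - 1 = w := by omega
    rw [h1, hrj, hrw]
    exact hxy

lemma bad_expand {B : Finset ℕ} (hB : B ⊆ Finset.Icc 1 n) (A : ArcSys (n - B.card)) :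
    bad (expand n B A) = B := by
  apply Finset.ext
  intro j
  rw [mem_bad]
  constructor
  · rintro ⟨hjI, hjL, hjR⟩
    by_contra hjB
    have hj : j ∈ kept n B := by
      rw [mem_kept]
      rw [Finset.mem_Icc] at hjI
      exact ⟨hjI.1, by omega, hjB⟩
    set x := rk n B j with hxdef
    have hx1 : 1 ≤ x := rk_pos hj
    have hx2 : x ≤ n - B.card := by
      have h2 : x < rk n B (n+1) := rk_lt (top_mem_kept hB) (by
        rw [Finset.mem_Icc] at hjI
        omega)
      rw [rk_top hB, card_kept_succ hB] at h2
      omega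
    by_cases hex : ∃ y, (x, y) ∈ earcs A
    · obtain ⟨y, hy⟩ := hex
      obtain ⟨w, _, _, _, harc⟩ := expand_arc_exists hB hy hj rfl
      exact hjL (mem_LEs.2 ⟨(j, w+1), harc, rfl⟩)
    · have hxR : x ∈ REs A := by
        by_contra hxR
        by_cases hxL : x ∈ LEs A
        · obtain ⟨q, hq, hq1⟩ := mem_LEs.1 hxL
          exact hex ⟨q.2, by
            rw [← hq1]
            exact mem_earcs.2 (Or.inl (by
              have : (q.1, q.2) = q := rfl
              rw [this]
              exact hq))⟩
        · apply hex
          refine ⟨x, mem_earcs.2 (Or.inr ⟨rfl, ?_, hxL, hxR⟩)⟩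
          rw [Finset.mem_Icc]
          exact ⟨hx1, hx2⟩
      obtain ⟨q, hq, hq2⟩ := mem_REs.1 hxR
      have hwb : 1 ≤ q.1 ∧ q.1 ≤ n - B.card := by
        have := A.mem1 _ hq
        rw [Finset.mem_Icc] at this
        exact this
      have hwcard : q.1 ≤ (kept n B).card := by
        rw [card_kept_succ hB]
        omega
      obtain ⟨u, hu, hru⟩ := rk_surj hB q.1 hwb.1 hwcard
      have harc : (u, j + 1) ∈ (expand n B A).arcs := by
        rw [mem_expand]
        rw [Finset.mem_Icc] at hjI
        refine ⟨?_, ?_, hu, by omega, by simpa using hj, ?_⟩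
        · rw [Finset.mem_Icc]
          have := (mem_kept.1 hu).1
          have := (mem_kept.1 hu).2.1
          omega
        · rw [Finset.mem_Icc]
          omega
        · have h1 : j + 1 - 1 = j := by omega
          rw [h1, hru, ← hxdef]
          rw [← hq2]
          apply mem_earcs.2
          left
          have : (q.1, q.2) = q := rfl
          rw [this]
          exact hq
      exact hjR (mem_REs.2 ⟨(u, j+1), harc, rfl⟩)
  · intro hjB
    have hjI : j ∈ Finset.Icc 1 n := hB hjB
    refine ⟨hjI, ?_, ?_⟩
    · rw [mem_LEs]
      rintro ⟨q, hq, hq1⟩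
      rw [mem_expand] at hq
      have := hq.2.2.1
      rw [hq1, mem_kept] at this
      exact this.2.2 hjB
    · rw [mem_REs]
      rintro ⟨q, hq, hq2⟩
      rw [mem_expand] at hq
      have := hq.2.2.2.2.1
      rw [hq2] at this
      simp only [Nat.add_sub_cancel] at this
      rw [mem_kept] at this
      exact this.2.2 hjB

lemma phi_expand {B : Finset ℕ} (hB : B ⊆ Finset.Icc 1 n) {A : ArcSys (n - B.card)}
    {p : ℕ × ℕ} (hp : p ∈ (expand n B A).arcs) :
    Phi (expand n B A) p = (rk n B p.1, rk n B (p.2 - 1)) := by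
  obtain ⟨h1, h2, hk1, hge2, hk2, he⟩ := mem_expand.1 hp
  unfold Phi
  rw [bad_expand hB]
  have hc : rk n B (chase n B p.2) = rk n B (p.2 - 1) + 1 :=
    rk_chase hB hk2 (by omega) (by rw [Finset.mem_Icc] at h2; exact h2.2)
  rw [hc]
  simp

lemma contracted_expand_arcs {B : Finset ℕ} (hB : B ⊆ Finset.Icc 1 n)
    (A : ArcSys (n - B.card)) : (contracted (expand n B A)).arcs = A.arcs := by
  apply Finset.ext
  intro q
  constructor
  · intro hq
    obtain ⟨⟨p, hp, hPhi⟩, hlt⟩ := mem_contracted.1 hq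
    rw [phi_expand hB hp] at hPhi
    obtain ⟨_, _, _, _, _, he⟩ := mem_expand.1 hp
    rw [hPhi] at he
    rcases mem_earcs.1 he with h | h
    · exact h
    · omega
  · intro hq
    have hxb : 1 ≤ q.1 ∧ q.1 ≤ n - B.card := by
      have := A.mem1 _ hq
      rwa [Finset.mem_Icc] at this
    have hxcard : q.1 ≤ (kept n B).card := by
      rw [card_kept_succ hB]
      omega
    obtain ⟨j, hj, hrj⟩ := rk_surj hB q.1 hxb.1 hxcard
    have hq' : (q.1, q.2) ∈ earcs A := by
      apply mem_earcs.2
      left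
      have : (q.1, q.2) = q := rfl
      rw [this]
      exact hq
    obtain ⟨w, hw, hrw, hwtop, harc⟩ := expand_arc_exists hB hq' hj hrj
    apply mem_contracted.2
    have hPhi : Phi (expand n B A) (j, w+1) = q := by
      rw [phi_expand hB harc]
      simp only [Nat.add_sub_cancel]
      rw [hrj, hrw]
    refine ⟨⟨(j, w+1), harc, hPhi⟩, ?_⟩
    exact A.lt' _ hq

lemma expand_contracted (σ : ArcSys (n+1)) : expand n (bad σ) (contracted σ) = σ := by
  apply ArcSys.ext'
  apply Finset.ext
  intro p
  constructor
  · intro hp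
    obtain ⟨h1, h2, hk1, hge2, hk2, he⟩ := mem_expand.1 hp
    rw [earcs_contracted] at he
    obtain ⟨q, hq, hPhi⟩ := Finset.mem_image.1 he
    have hfst : rk n (bad σ) q.1 = rk n (bad σ) p.1 := by
      have := congrArg Prod.fst hPhi
      unfold Phi at this
      simpa using this
    have hq1 : q.1 = p.1 := rk_inj (arc_fst_kept hq) hk1 hfst
    have hsnd : rk n (bad σ) (chase n (bad σ) q.2) - 1 = rk n (bad σ) (p.2 - 1) := by
      have := congrArg Prod.snd hPhi
      unfold Phi at this
      simpa using this
    have hca := rk_chase_arc hq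
    have hsnd2 : rk n (bad σ) (q.2 - 1) = rk n (bad σ) (p.2 - 1) := by omega
    have hq2' : q.2 - 1 = p.2 - 1 := rk_inj (arc_snd_pred_kept hq) hk2 hsnd2
    have hge2' : 2 ≤ q.2 := arc_snd_ge2 hq
    have hq2 : q.2 = p.2 := by omega
    have : q = p := Prod.ext hq1 hq2
    rw [← this]
    exact hq
  · intro hp
    apply mem_expand.2
    refine ⟨σ.mem1 _ hp, σ.mem2 _ hp, arc_fst_kept hp, arc_snd_ge2 hp,
      arc_snd_pred_kept hp, ?_⟩
    rw [earcs_contracted]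
    apply Finset.mem_image.2
    refine ⟨p, hp, ?_⟩
    unfold Phi
    have hca := rk_chase_arc hp
    apply Prod.ext
    · rfl
    · simp only []
      omega

lemma heq_sub {m m' k : ℕ} (h : m = m') {x : {A : ArcSys m // ¬ EnA A k}}
    {y : {A : ArcSys m' // ¬ EnA A k}} (harcs : x.1.arcs = y.1.arcs) : HEq x y := by
  subst h
  exact heq_of_eq (Subtype.ext (ArcSys.ext' harcs))

def bigEquiv (n k : ℕ) : {σ : ArcSys (n+1) // ¬ ClA σ k} ≃
    (Σ B : ((Finset.Icc 1 n).powerset : Finset (Finset ℕ)),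
      {A : ArcSys (n - (B : Finset ℕ).card) // ¬ EnA A k}) where
  toFun σp := ⟨⟨bad σp.1, Finset.mem_powerset.2 (bad_subset σp.1)⟩,
    ⟨contracted σp.1, fun h => σp.2 ((clA_iff_enA σp.1 k).2 h)⟩⟩
  invFun Bp := ⟨expand n Bp.1.1 Bp.2.1, by
    intro hcl
    apply Bp.2.2
    have hB : (Bp.1 : Finset ℕ) ⊆ Finset.Icc 1 n := Finset.mem_powerset.1 Bp.1.2
    have h1 := (clA_iff_enA (expand n Bp.1.1 Bp.2.1) k).1 hcl
    have h2 : EnA (contracted (expand n Bp.1.1 Bp.2.1)) k ↔ EnA Bp.2.1 k :=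
      EnA_congr (by rw [bad_expand hB]) (contracted_expand_arcs hB Bp.2.1)
    exact h2.1 h1⟩
  left_inv σp := Subtype.ext (expand_contracted σp.1)
  right_inv Bp := by
    obtain ⟨⟨B, hBmem⟩, A, hA⟩ := Bp
    have hB : B ⊆ Finset.Icc 1 n := Finset.mem_powerset.1 hBmem
    have hbe : bad (expand n B A) = B := bad_expand hB A
    refine Sigma.ext ?_ ?_
    · exact Subtype.ext hbe
    · exact heq_sub (show n - (bad (expand n B A)).card = n - B.card by rw [hbe])
        (contracted_expand_arcs hB A)
end

end SPX

theorem stmt0 (n k : ℕ) (hk : 1 ≤ k) :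
    Nat.card {π : Finpartition (Finset.Icc 1 (n+1)) // ¬ ClCross π k} =
      ∑ i ∈ Finset.range (n+1), n.choose i *
        Nat.card {π : Finpartition (Finset.Icc 1 i) // ¬ EnhCross π k} := by
  classical
  set g : ℕ → ℕ := fun i => Nat.card {A : SPX.ArcSys i // ¬ SPX.EnA A k} with hgdef
  have step1 : Nat.card {π : Finpartition (Finset.Icc 1 (n+1)) // ¬ ClCross π k} =
      ∑ B ∈ (Finset.Icc 1 n).powerset, g (n - B.card) := by
    rw [SPX.card_cl (n+1) k, Nat.card_congr (SPX.bigEquiv n k)]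
    letI inst1 : ∀ B : ((Finset.Icc 1 n).powerset : Finset (Finset ℕ)),
        Fintype {A : SPX.ArcSys (n - (B : Finset ℕ).card) // ¬ SPX.EnA A k} :=
      fun B => Fintype.ofFinite _
    rw [Nat.card_eq_fintype_card, Fintype.card_sigma]
    have hstep : ∀ B : ((Finset.Icc 1 n).powerset : Finset (Finset ℕ)),
        Fintype.card {A : SPX.ArcSys (n - (B : Finset ℕ).card) // ¬ SPX.EnA A k} =
        g (n - (B : Finset ℕ).card) := fun B => (Nat.card_eq_fintype_card).symm
    rw [Finset.sum_congr rfl (fun B _ => hstep B)]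
    exact Finset.sum_coe_sort ((Finset.Icc 1 n).powerset) (fun B => g (n - B.card))
  rw [step1]
  have step2 : ∑ B ∈ (Finset.Icc 1 n).powerset, g (n - B.card) =
      ∑ c ∈ Finset.range (n+1), n.choose c * g (n - c) := by
    rw [← Finset.sum_fiberwise_of_maps_to (g := Finset.card) (t := Finset.range (n+1))
      (fun B hB => by
        rw [Finset.mem_range]
        have : B.card ≤ n := by
          have h1 := Finset.card_le_card (Finset.mem_powerset.1 hB)
          simpa using h1
        omega) (fun B => g (n - B.card))]
    apply Finset.sum_congr rfl
    intro c _
    have hconst : ∑ B ∈ (Finset.Icc 1 n).powerset.filter (fun B => B.card = c),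
        g (n - B.card) =
        ∑ _B ∈ (Finset.Icc 1 n).powerset.filter (fun B => B.card = c), g (n - c) := by
      apply Finset.sum_congr rfl
      intro B hB
      rw [(Finset.mem_filter.1 hB).2]
    rw [hconst, Finset.sum_const, smul_eq_mul]
    congr 1
    rw [← Finset.powersetCard_eq_filter, Finset.card_powersetCard, Nat.card_Icc]
    simp
  rw [step2]
  have step3 : ∑ c ∈ Finset.range (n+1), n.choose c * g (n - c) =
      ∑ i ∈ Finset.range (n+1), n.choose i * g i := by
    have hrefl := Finset.sum_range_reflect (fun c => n.choose c * g (n - c)) (n+1)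
    rw [← hrefl]
    apply Finset.sum_congr rfl
    intro j hj
    rw [Finset.mem_range] at hj
    have hj' : j ≤ n := by omega
    have e1 : n + 1 - 1 - j = n - j := by omega
    rw [e1, Nat.choose_symm hj']
    congr 2
    omega
  rw [step3]
  apply Finset.sum_congr rfl
  intro i _
  congr 1
  exact (SPX.card_enh i k).symm
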